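/- Let Z, U be Hilbert spaces, Z_ad ⊆ Z weakly closed and bounded, X a Hilbert space, S : Z_ad → U a map with ‖S(z)‖_U ≤ M(‖z‖_Z) for a locally bounded M : [0,∞) → [0,∞), e : U × Z_ad → X* weakly (sequentially) continuous with e(S(z), z) = 0 for all z ∈ Z_ad and the property that e(Ũ, z̃) = 0 implies Ũ = S(z̃), and J : U × Z_ad → ℝ weakly lower semicontinuous and bounded below on the feasible set. Then the problem min { J(U, z) : U ∈ U, z ∈ Z_ad, e(U, z) = 0 } attains a global minimum. -/

import Mathlib

open Filter Topology

/-- Weak sequential convergence in a real inner product space. -/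
def WeakConvSeq {E : Type*} [NormedAddCommGroup E] [InnerProductSpace ℝ E]
    (x : ℕ → E) (x₀ : E) : Prop :=
  ∀ y : E, Tendsto (fun k => (inner ℝ (x k) y : ℝ)) atTop (nhds (inner ℝ x₀ y))

lemma exists_weak_subseq {E : Type*} [NormedAddCommGroup E] [InnerProductSpace ℝ E]
    [CompleteSpace E] (x : ℕ → E) (C : ℝ) (hx : ∀ k, ‖x k‖ ≤ C) :
    ∃ (x₀ : E) (φ : ℕ → ℕ), StrictMono φ ∧ WeakConvSeq (x ∘ φ) x₀ := by
  have hC0 : 0 ≤ C := le_trans (norm_nonneg (x 0)) (hx 0)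
  set D : Submodule ℝ E := (Submodule.span ℝ (Set.range x)).topologicalClosure with hD
  haveI : CompleteSpace D := (Submodule.isClosed_topologicalClosure _).completeSpace_coe
  have hxD : ∀ k, x k ∈ D := fun k =>
    Submodule.le_topologicalClosure _ (Submodule.subset_span ⟨k, rfl⟩)
  -- separable dense sequence
  have hsep : TopologicalSpace.IsSeparable (D : Set E) :=
    (TopologicalSpace.IsSeparable.span
      ((Set.countable_range x).isSeparable)).closure
  obtain ⟨c, hc_count, hc_sub⟩ := hsep
  obtain ⟨y, hy⟩ : ∃ y : ℕ → E, insert (0:E) c = Set.range y :=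
    ((hc_count.insert 0).exists_eq_range (Set.insert_nonempty _ _))
  have hyD : (D : Set E) ⊆ closure (Set.range y) := by
    rw [← hy]
    exact hc_sub.trans (closure_mono (Set.subset_insert _ _))
  -- compactness extraction
  set g : ℕ → ℕ → ℝ := fun k n => (inner ℝ (x k) (y n) : ℝ) with hg
  have hgmem : ∀ k, g k ∈ Set.pi Set.univ
      (fun n => Set.Icc (-(C * ‖y n‖)) (C * ‖y n‖)) := by
    intro k n _
    rw [Set.mem_Icc, ← abs_le]
    calc |(inner ℝ (x k) (y n) : ℝ)| ≤ ‖x k‖ * ‖y n‖ := abs_real_inner_le_norm _ _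
      _ ≤ C * ‖y n‖ := by
          exact mul_le_mul_of_nonneg_right (hx k) (norm_nonneg _)
  obtain ⟨L, -, φ, hφ, hL⟩ :=
    (isCompact_univ_pi (fun n => isCompact_Icc (a := -(C * ‖y n‖))
      (b := C * ‖y n‖))).tendsto_subseq hgmem
  have hLpt : ∀ n, Tendsto (fun k => g (φ k) n) atTop (𝓝 (L n)) := by
    rw [tendsto_pi_nhds] at hL
    exact hL
  -- projection
  have hproj : ∀ v : E, ∀ k, (inner ℝ (x k) v : ℝ)
      = inner ℝ (x k) ((D.orthogonalProjection v : E)) := by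
    intro v k
    have hperp : v - (D.orthogonalProjection v : E) ∈ Dᗮ :=
      D.sub_starProjection_mem_orthogonal v
    have h0 : (inner ℝ (x k) (v - (D.orthogonalProjection v : E)) : ℝ) = 0 :=
      hperp (x k) (hxD k)
    rw [inner_sub_right] at h0
    linarith
  -- Cauchy
  have hCauchy : ∀ v : E, CauchySeq (fun k => (inner ℝ (x (φ k)) v : ℝ)) := by
    intro v
    have hred : (fun k => (inner ℝ (x (φ k)) v : ℝ))
        = fun k => (inner ℝ (x (φ k)) ((D.orthogonalProjection v : E)) : ℝ) := by
      funext k; exact hproj v (φ k)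
    rw [hred]
    set w : E := (D.orthogonalProjection v : E) with hw
    have hwD : w ∈ closure (Set.range y) := hyD (D.orthogonalProjection v).2
    rw [Metric.cauchySeq_iff]
    intro ε hε
    obtain ⟨b, ⟨n, rfl⟩, hb⟩ := Metric.mem_closure_iff.mp hwD (ε / (4 * (C + 1)))
      (by positivity)
    have hCn : CauchySeq (fun k => g (φ k) n) := (hLpt n).cauchySeq
    rw [Metric.cauchySeq_iff] at hCn
    obtain ⟨N, hN⟩ := hCn (ε / 2) (by positivity)
    refine ⟨N, fun i hi j hj => ?_⟩
    have key : ∀ k, |(inner ℝ (x (φ k)) w : ℝ) - g (φ k) n| ≤ ε / 4 := by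
      intro k
      have : (inner ℝ (x (φ k)) w : ℝ) - g (φ k) n = inner ℝ (x (φ k)) (w - y n) := by
        rw [inner_sub_right]
      rw [this]
      calc |(inner ℝ (x (φ k)) (w - y n) : ℝ)| ≤ ‖x (φ k)‖ * ‖w - y n‖ :=
            abs_real_inner_le_norm _ _
        _ ≤ C * (ε / (4 * (C + 1))) := by
            apply mul_le_mul (hx _) _ (norm_nonneg _) hC0
            rw [← dist_eq_norm]
            exact hb.le
        _ ≤ (C + 1) * (ε / (4 * (C + 1))) := by gcongr; linarith
        _ = ε / 4 := by field_simp
    have h1 := key i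
    have h2 := key j
    have h3 := hN i hi j hj
    rw [Real.dist_eq] at h3 ⊢
    have t1 := abs_sub_le ((inner ℝ (x (φ i)) w : ℝ)) (g (φ i) n) ((inner ℝ (x (φ j)) w : ℝ))
    have t2 := abs_sub_le (g (φ i) n) (g (φ j) n) ((inner ℝ (x (φ j)) w : ℝ))
    rw [abs_sub_comm] at h2
    linarith
  -- limit functional
  choose F hF using fun v => cauchySeq_tendsto_of_complete (hCauchy v)
  have hbound : ∀ v, ‖F v‖ ≤ C * ‖v‖ := by
    intro v
    refine le_of_tendsto (hF v).norm (Eventually.of_forall fun k => ?_)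
    rw [Real.norm_eq_abs]
    exact (abs_real_inner_le_norm _ _).trans
      (mul_le_mul_of_nonneg_right (hx _) (norm_nonneg _))
  -- linear functional
  have hadd : ∀ u v, F (u + v) = F u + F v := by
    intro u v
    refine tendsto_nhds_unique ?_ ((hF u).add (hF v))
    have : (fun k => (inner ℝ (x (φ k)) (u + v) : ℝ))
        = fun k => (inner ℝ (x (φ k)) u : ℝ) + inner ℝ (x (φ k)) v := by
      funext k; rw [inner_add_right]
    rw [← this]; exact hF (u + v)
  have hsmul : ∀ (a : ℝ) v, F (a • v) = a * F v := by
    intro a v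
    refine tendsto_nhds_unique ?_ ((hF v).const_mul a)
    have : (fun k => (inner ℝ (x (φ k)) (a • v) : ℝ))
        = fun k => a * inner ℝ (x (φ k)) v := by
      funext k; rw [real_inner_smul_right]
    rw [← this]; exact hF (a • v)
  let Flin : E →ₗ[ℝ] ℝ :=
    { toFun := F, map_add' := hadd, map_smul' := hsmul }
  let Fclm : E →L[ℝ] ℝ := Flin.mkContinuous C hbound
  refine ⟨(InnerProductSpace.toDual ℝ E).symm Fclm, φ, hφ, fun v => ?_⟩
  have : (inner ℝ ((InnerProductSpace.toDual ℝ E).symm Fclm) v : ℝ) = Fclm v := by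
    rw [← InnerProductSpace.toDual_apply_apply, LinearIsometryEquiv.apply_symm_apply]
  rw [this]
  exact hF v

/-- existence of a global minimizer for the abstract
PDE-constrained optimization problem `min { J(U,z) : z ∈ Z_ad, e(U,z) = 0 }`. -/
theorem existence_minimizer
    {Z U X : Type*}
    [NormedAddCommGroup Z] [InnerProductSpace ℝ Z] [CompleteSpace Z]
    [NormedAddCommGroup U] [InnerProductSpace ℝ U] [CompleteSpace U]
    [NormedAddCommGroup X] [InnerProductSpace ℝ X] [CompleteSpace X]
    (Zad : Set Z)
    -- (A1) Z_ad weakly sequentially closed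
    (hZadClosed : ∀ (zk : ℕ → Z) (z : Z), (∀ k, zk k ∈ Zad) →
      WeakConvSeq zk z → z ∈ Zad)
    -- (A6) Z_ad bounded
    (hZadBdd : ∃ R : ℝ, ∀ z ∈ Zad, ‖z‖ ≤ R)
    -- (A3) bounded solution operator
    (S : Z → U) (M : ℝ → ℝ)
    (hMloc : ∀ r : ℝ, 0 ≤ r → ∃ C : ℝ, ∀ x ∈ Set.Icc 0 r, M x ≤ C)
    (hSbdd : ∀ z ∈ Zad, ‖S z‖ ≤ M ‖z‖)
    -- state equation, solved exactly by S on Z_ad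
    (e : U → Z → X)
    (hSsolves : ∀ z ∈ Zad, e (S z) z = 0)
    (hSunique : ∀ (V : U), ∀ z ∈ Zad, e V z = 0 → V = S z)
    -- (A4) weak sequential continuity of e
    (heWeakCont : ∀ (Uk : ℕ → U) (zk : ℕ → Z) (V : U) (z : Z),
      (∀ k, zk k ∈ Zad) → WeakConvSeq Uk V → WeakConvSeq zk z →
      ∀ P : X, Tendsto (fun k => (inner ℝ P (e (Uk k) (zk k)) : ℝ)) atTop
        (nhds (inner ℝ P (e V z))))
    -- (A5) J weakly lower semicontinuous, and bounded below on the feasible set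
    (J : U → Z → ℝ)
    (hJwlsc : ∀ (Uk : ℕ → U) (zk : ℕ → Z) (V : U) (z : Z),
      WeakConvSeq Uk V → WeakConvSeq zk z →
      J V z ≤ liminf (fun k => J (Uk k) (zk k)) atTop)
    (hJbelow : ∃ c : ℝ, ∀ (V : U), ∀ z ∈ Zad, e V z = 0 → c ≤ J V z)
    (hZadNonempty : Zad.Nonempty) :
    ∃ (Ubar : U) (zbar : Z), zbar ∈ Zad ∧ e Ubar zbar = 0 ∧
      ∀ (V : U), ∀ z ∈ Zad, e V z = 0 → J Ubar zbar ≤ J V z := by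
  obtain ⟨z₀, hz₀⟩ := hZadNonempty
  obtain ⟨R, hR⟩ := hZadBdd
  have hR0 : 0 ≤ R := le_trans (norm_nonneg z₀) (hR z₀ hz₀)
  obtain ⟨C, hCM⟩ := hMloc R hR0
  have hSC : ∀ z ∈ Zad, ‖S z‖ ≤ C := fun z hzz =>
    (hSbdd z hzz).trans (hCM _ ⟨norm_nonneg z, hR z hzz⟩)
  obtain ⟨c, hc⟩ := hJbelow
  set A : Set ℝ := {r | ∃ V zz, zz ∈ Zad ∧ e V zz = 0 ∧ J V zz = r} with hA
  have hAne : A.Nonempty := ⟨J (S z₀) z₀, S z₀, z₀, hz₀, hSsolves z₀ hz₀, rfl⟩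
  have hAbdd : BddBelow A := ⟨c, fun r ⟨V, zz, hzz, hee, hr⟩ => hr ▸ hc V zz hzz hee⟩
  set m := sInf A with hm
  have hseq : ∀ k : ℕ, ∃ V zz, zz ∈ Zad ∧ e V zz = 0 ∧ J V zz < m + 1/(k+1) := by
    intro k
    have hlt : m < m + 1/(k+1) := by
      have : (0:ℝ) < 1/((k:ℝ)+1) := by positivity
      linarith
    obtain ⟨r, ⟨V, zz, hzz, hee, hr⟩, hrlt⟩ := exists_lt_of_csInf_lt hAne hlt
    exact ⟨V, zz, hzz, hee, hr ▸ hrlt⟩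
  choose V z hz he hJlt using hseq
  obtain ⟨zbar, φ, hφ, hzconv⟩ := exists_weak_subseq z R (fun k => hR _ (hz k))
  obtain ⟨Ubar, ψ, hψ, hUconv⟩ := exists_weak_subseq (V ∘ φ) C
    (fun k => by
      have := hSunique (V (φ k)) (z (φ k)) (hz (φ k)) (he (φ k))
      rw [Function.comp_apply, this]
      exact hSC _ (hz _))
  set σ : ℕ → ℕ := φ ∘ ψ with hσdef
  have hσ : StrictMono σ := hφ.comp hψ
  have hzconv2 : WeakConvSeq (z ∘ σ) zbar := fun v =>
    (hzconv v).comp hψ.tendsto_atTop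
  have hUconv2 : WeakConvSeq (V ∘ σ) Ubar := hUconv
  have hzbar : zbar ∈ Zad := hZadClosed _ _ (fun k => hz (σ k)) hzconv2
  have hebar : e Ubar zbar = 0 := by
    have h0 : ∀ P : X, (inner ℝ P (e Ubar zbar) : ℝ) = 0 := by
      intro P
      have ht := heWeakCont (V ∘ σ) (z ∘ σ) Ubar zbar (fun k => hz _) hUconv2 hzconv2 P
      have hzero : (fun k => (inner ℝ P (e ((V ∘ σ) k) ((z ∘ σ) k)) : ℝ))
          = fun _ => (0:ℝ) := by
        funext k
        rw [Function.comp_apply, Function.comp_apply, he, inner_zero_right]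
      rw [hzero] at ht
      exact (tendsto_nhds_unique tendsto_const_nhds ht).symm
    have := h0 (e Ubar zbar)
    rwa [real_inner_self_eq_norm_sq, pow_eq_zero_iff (two_ne_zero), norm_eq_zero] at this
  have hmle : J Ubar zbar ≤ m := by
    have h1 := hJwlsc (V ∘ σ) (z ∘ σ) Ubar zbar hUconv2 hzconv2
    refine h1.trans ?_
    have hbdd_above : ∀ k, J ((V ∘ σ) k) ((z ∘ σ) k) ≤ m + 1/(k+1) := by
      intro k
      have h2 := (hJlt (σ k)).le
      have h3 : (1:ℝ)/((σ k : ℝ)+1) ≤ 1/((k:ℝ)+1) := by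
        apply one_div_le_one_div_of_le (by positivity)
        have : (k:ℝ) ≤ (σ k : ℝ) := Nat.cast_le.mpr (hσ.le_apply)
        linarith
      simp only [Function.comp_apply]
      linarith
    have htend : Tendsto (fun k : ℕ => m + 1/((k:ℝ)+1)) atTop (𝓝 m) := by
      have := tendsto_const_nhds (x := m) (f := atTop (α := ℕ)) |>.add
        tendsto_one_div_add_atTop_nhds_zero_nat
      simpa using this
    calc liminf (fun k => J ((V ∘ σ) k) ((z ∘ σ) k)) atTop
        ≤ liminf (fun k : ℕ => m + 1/((k:ℝ)+1)) atTop := by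
          refine liminf_le_liminf (Eventually.of_forall hbdd_above) ?_ ?_
          · exact ⟨c, eventually_map.2 (Eventually.of_forall
              (fun k => hc _ _ (hz (σ k)) (he (σ k))))⟩
          · refine Filter.IsBoundedUnder.isCoboundedUnder_ge
              (⟨m + 1, eventually_map.2 (Eventually.of_forall fun k => ?_)⟩ :
                IsBoundedUnder (· ≤ ·) atTop fun k : ℕ => m + 1/((k:ℝ)+1))
            have h5 : (1:ℝ)/((k:ℝ)+1) ≤ 1 := by
              rw [div_le_one (by positivity)]; linarith [Nat.cast_nonneg (α := ℝ) k]
            linarith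
      _ = m := htend.liminf_eq
  exact ⟨Ubar, zbar, hzbar, hebar, fun Vv zz hzz hee =>
    hmle.trans (csInf_le hAbdd ⟨Vv, zz, hzz, hee, rfl⟩)⟩
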